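/- Let $c>0$, $\tau>0$, $a_-<0$, $b_-<0$. Then no zero of $\chi_-(z)=z^2-cz+a_-+b_-e^{-zc\tau}$ has multiplicity greater than two; that is, the system $\chi_-(z)=\chi_-'(z)=\chi_-''(z)=0$ has no solution. -/

import Mathlib

lemma chi_deriv1 (c τ a b : ℝ) :
    deriv (fun w : ℂ => w ^ 2 - (c : ℂ) * w + (a : ℂ) +
        (b : ℂ) * Complex.exp (-(w * ((c : ℂ) * (τ : ℂ)))))
    = fun w : ℂ => 2 * w - (c : ℂ) +
        (b : ℂ) * (Complex.exp (-(w * ((c : ℂ) * (τ : ℂ)))) * (-((c : ℂ) * (τ : ℂ)))) := by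
  funext w
  have h1 : HasDerivAt (fun w : ℂ => -(w * ((c : ℂ) * (τ : ℂ)))) (-((c : ℂ) * (τ : ℂ))) w := by
    simpa using ((hasDerivAt_id w).mul_const ((c : ℂ) * (τ : ℂ))).fun_neg
  have h : HasDerivAt (fun w : ℂ => w ^ 2 - (c : ℂ) * w + (a : ℂ) +
      (b : ℂ) * Complex.exp (-(w * ((c : ℂ) * (τ : ℂ)))))
      (2 * w - (c : ℂ) +
        (b : ℂ) * (Complex.exp (-(w * ((c : ℂ) * (τ : ℂ)))) * (-((c : ℂ) * (τ : ℂ))))) w := by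
    have hp : HasDerivAt (fun w : ℂ => w ^ 2) (2 * w) w := by
      simpa using hasDerivAt_pow 2 w
    have hcw : HasDerivAt (fun w : ℂ => (c : ℂ) * w) (c : ℂ) w := by
      simpa using (hasDerivAt_id w).const_mul (c : ℂ)
    exact (((hp.sub hcw).add_const (a : ℂ)).add (h1.cexp.const_mul (b : ℂ)))
  exact h.deriv

theorem chi_minus_no_triple_zero (c τ a b : ℝ) (hc : 0 < c) (hτ : 0 < τ)
    (ha : a < 0) (hb : b < 0) :
    ¬ ∃ z : ℂ,
      (z ^ 2 - (c : ℂ) * z + (a : ℂ) +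
        (b : ℂ) * Complex.exp (-(z * ((c : ℂ) * (τ : ℂ)))) = 0) ∧
      deriv (fun w : ℂ => w ^ 2 - (c : ℂ) * w + (a : ℂ) +
        (b : ℂ) * Complex.exp (-(w * ((c : ℂ) * (τ : ℂ))))) z = 0 ∧
      deriv (deriv (fun w : ℂ => w ^ 2 - (c : ℂ) * w + (a : ℂ) +
        (b : ℂ) * Complex.exp (-(w * ((c : ℂ) * (τ : ℂ)))))) z = 0 := by
  rintro ⟨z, h1, h2, h3⟩
  rw [chi_deriv1] at h2 h3
  set k : ℂ := (c : ℂ) * (τ : ℂ) with hk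
  have hk0 : k ≠ 0 := by
    simp only [hk, ne_eq, mul_eq_zero, Complex.ofReal_eq_zero]
    push_neg
    exact ⟨ne_of_gt hc, ne_of_gt hτ⟩
  -- compute second derivative at z
  have h1' : HasDerivAt (fun w : ℂ => -(w * k)) (-k) z := by
    simpa using ((hasDerivAt_id z).mul_const k).fun_neg
  have hd2 : HasDerivAt (fun w : ℂ => 2 * w - (c : ℂ) +
      (b : ℂ) * (Complex.exp (-(w * k)) * (-k)))
      (2 + (b : ℂ) * (Complex.exp (-(z * k)) * (-k) * (-k))) z := by
    have hlin : HasDerivAt (fun w : ℂ => 2 * w - (c : ℂ)) 2 z := by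
      simpa using ((hasDerivAt_id z).const_mul (2 : ℂ)).sub_const (c : ℂ)
    have hexp : HasDerivAt (fun w : ℂ => (b : ℂ) * (Complex.exp (-(w * k)) * (-k)))
        ((b : ℂ) * (Complex.exp (-(z * k)) * (-k) * (-k))) z := by
      simpa [mul_comm, mul_assoc, mul_left_comm] using
        ((h1'.cexp.mul_const (-k)).const_mul (b : ℂ))
    exact hlin.add hexp
  rw [hd2.deriv] at h3
  set E : ℂ := (b : ℂ) * Complex.exp (-(z * k)) with hE
  have e1 : z ^ 2 - (c : ℂ) * z + (a : ℂ) + E = 0 := h1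
  have e2 : 2 * z - (c : ℂ) - E * k = 0 := by
    rw [hE]; linear_combination h2
  have e3 : 2 + E * k ^ 2 = 0 := by
    rw [hE]; linear_combination h3
  clear_value E k
  -- eliminate E and z
  have hzkd : 2 * z * k - (c : ℂ) * k + 2 = 0 := by linear_combination k * e2 + e3
  have hak : 4 * (a : ℂ) * k ^ 2 = (c : ℂ) ^ 2 * k ^ 2 + 4 := by
    linear_combination 4 * k ^ 2 * e1 - 4 * e3 + (2 - 2 * z * k + (c : ℂ) * k) * hzkd
  rw [hk] at hak
  have hakR : 4 * a * (c * τ) ^ 2 = c ^ 2 * (c * τ) ^ 2 + 4 := by exact_mod_cast hak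
  nlinarith [mul_pos (mul_pos hc hτ) (mul_pos hc hτ), sq_nonneg (c * τ)]
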